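/- Let λ_1 ≤ λ_2 ≤ … ≤ λ_n be the eigenvalues of the Kirchhoff Laplacian K of a finite simple graph with vertex degrees d_1 ≤ d_2 ≤ … ≤ d_n sorted increasingly. Then λ_k ≤ 2 d_k for every k. -/

import Mathlib

open Matrix Finset

lemma quad_le_two_degree_sum {V : Type*} [Fintype V] [DecidableEq V]
    (G : SimpleGraph V) [DecidableRel G.Adj] (x : V → ℝ) :
    x ⬝ᵥ (G.lapMatrix ℝ *ᵥ x) ≤ 2 * ∑ i, (G.degree i : ℝ) * (x i * x i) := by
  rw [← Matrix.toLinearMap₂'_apply', SimpleGraph.lapMatrix_toLinearMap₂']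
  have key : ∀ i : V, ∑ j : V, (if G.Adj i j then 2*(x i * x i) else 0)
      = 2 * ((G.degree i : ℝ) * (x i * x i)) := by
    intro i
    have : ∀ j : V, (if G.Adj i j then 2*(x i * x i) else 0)
        = (if G.Adj i j then (1:ℝ) else 0) * (2*(x i * x i)) := by
      intro j; split <;> ring
    rw [Finset.sum_congr rfl fun j _ => this j, ← Finset.sum_mul,
      ← SimpleGraph.degree_eq_sum_if_adj]
    ring
  have h1 : (∑ i : V, ∑ j : V, if G.Adj i j then (x i - x j)^2 else 0)
      ≤ ∑ i : V, ∑ j : V, if G.Adj i j then 2*(x i * x i) + 2*(x j * x j) else 0 := by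
    apply Finset.sum_le_sum; intro i _
    apply Finset.sum_le_sum; intro j _
    split
    · nlinarith [sq_nonneg (x i + x j)]
    · exact le_rfl
  have h3 : (∑ i : V, ∑ j : V, if G.Adj i j then 2*(x j * x j) else 0)
      = ∑ i : V, ∑ j : V, if G.Adj i j then 2*(x i * x i) else 0 := by
    rw [Finset.sum_comm]
    refine Finset.sum_congr rfl fun i _ => Finset.sum_congr rfl fun j _ => ?_
    exact if_congr (G.adj_comm j i) rfl rfl
  have h2 : (∑ i : V, ∑ j : V, if G.Adj i j then 2*(x i * x i) + 2*(x j * x j) else 0)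
      = 4 * ∑ i, (G.degree i : ℝ) * (x i * x i) := by
    have split_ite : ∀ i j : V, (if G.Adj i j then 2*(x i * x i) + 2*(x j * x j) else 0)
        = (if G.Adj i j then 2*(x i * x i) else 0) + (if G.Adj i j then 2*(x j * x j) else 0) := by
      intro i j; split <;> simp
    calc (∑ i : V, ∑ j : V, if G.Adj i j then 2*(x i * x i) + 2*(x j * x j) else 0)
        = (∑ i : V, ∑ j : V, if G.Adj i j then 2*(x i * x i) else 0)
          + ∑ i : V, ∑ j : V, if G.Adj i j then 2*(x j * x j) else 0 := by
          simp_rw [split_ite]; rw [← Finset.sum_add_distrib]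
          exact Finset.sum_congr rfl fun i _ => Finset.sum_add_distrib
      _ = 2 * ∑ i : V, ∑ j : V, (if G.Adj i j then 2*(x i * x i) else 0) := by rw [h3]; ring
      _ = 2 * ∑ i : V, 2 * ((G.degree i : ℝ) * (x i * x i)) := by
          rw [Finset.sum_congr rfl fun i _ => key i]
      _ = 4 * ∑ i, (G.degree i : ℝ) * (x i * x i) := by rw [← Finset.mul_sum]; ring
  linarith

/-- If `λ_1 ≤ … ≤ λ_n` are the eigenvalues of the Kirchhoff Laplacian of a finite
simple graph and `d_1 ≤ … ≤ d_n` its vertex degrees sorted increasingly, then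
`λ_k ≤ 2 d_k` for every `k`. -/
theorem lapMatrix_eigenvalue_le_two_mul_degree_sorted
    {V : Type*} [Fintype V] [DecidableEq V] (G : SimpleGraph V) [DecidableRel G.Adj]
    (hH : (G.lapMatrix ℝ).IsHermitian)
    (p q : Fin (Fintype.card V) ≃ V)
    (hp : Monotone fun k => hH.eigenvalues (p k))
    (hq : Monotone fun k => G.degree (q k)) :
    ∀ k, hH.eigenvalues (p k) ≤ 2 * (G.degree (q k) : ℝ) := by
  intro k
  classical
  set U : Matrix V V ℝ := (hH.eigenvectorUnitary : Matrix V V ℝ) with hU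
  set S : Finset V := (Finset.Iic k).image q with hSdef
  have hScard : S.card = (k : ℕ) + 1 := by
    rw [hSdef, Finset.card_image_of_injective _ q.injective, Fin.card_Iic]
  -- the linear map whose kernel provides the test vector
  let L1 : (V → ℝ) →ₗ[ℝ] ({v : V // v ∉ S} → ℝ) := LinearMap.funLeft ℝ ℝ Subtype.val
  let L2 : (Fin (Fintype.card V) → ℝ) →ₗ[ℝ] (V → ℝ) := LinearMap.funLeft ℝ ℝ p.symm
  let L3 : (Fin (Fintype.card V) → ℝ) →ₗ[ℝ] ({j : Fin (Fintype.card V) // ¬ k ≤ j} → ℝ) := LinearMap.funLeft ℝ ℝ Subtype.val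
  let Φ : (Fin (Fintype.card V) → ℝ) →ₗ[ℝ] (({v : V // v ∉ S} → ℝ) × ({j : Fin (Fintype.card V) // ¬ k ≤ j} → ℝ)) :=
    LinearMap.prod (L1.comp ((Matrix.mulVecLin U).comp L2)) L3
  have hcard1 : Fintype.card {v : V // v ∉ S} = Fintype.card V - ((k : ℕ) + 1) := by
    rw [Fintype.card_subtype_compl, Fintype.card_coe, hScard]
  have hcard2 : Fintype.card {j : Fin (Fintype.card V) // ¬ k ≤ j} = (k : ℕ) := by
    rw [Fintype.card_subtype]
    have : (Finset.univ.filter fun j : Fin (Fintype.card V) => ¬ k ≤ j) = Finset.Iio k := by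
      ext j; simp [Finset.mem_Iio, not_le]
    rw [this, Fin.card_Iio]
  have hkn : (k : ℕ) + 1 ≤ Fintype.card V := k.isLt
  have hker : ∃ c : Fin (Fintype.card V) → ℝ, c ≠ 0 ∧ Φ c = 0 := by
    have hrk := LinearMap.finrank_range_add_finrank_ker Φ
    have hdom : Module.finrank ℝ (Fin (Fintype.card V) → ℝ) = Fintype.card V := by
      simp [Module.finrank_pi]
    have hcod : Module.finrank ℝ (({v : V // v ∉ S} → ℝ) × ({j : Fin (Fintype.card V) // ¬ k ≤ j} → ℝ))
        = Fintype.card V - 1 := by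
      rw [Module.finrank_prod, Module.finrank_pi, Module.finrank_pi, hcard1, hcard2]
      omega
    have hle : Module.finrank ℝ (LinearMap.range Φ) ≤ Fintype.card V - 1 := by
      rw [← hcod]; exact Submodule.finrank_le _
    have hpos : 0 < Module.finrank ℝ (LinearMap.ker Φ) := by omega
    rw [Module.finrank_pos_iff] at hpos
    obtain ⟨⟨c, hc⟩, hne⟩ := exists_ne (0 : LinearMap.ker Φ)
    refine ⟨c, ?_, hc⟩
    simpa [Submodule.mk_eq_zero] using hne
  obtain ⟨c, hc0, hΦ⟩ := hker
  set y : V → ℝ := fun v => c (p.symm v) with hy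
  set x : V → ℝ := U *ᵥ y with hx
  have hΦ1 : ∀ u : V, u ∉ S → x u = 0 := by
    intro u hu
    have := congrFun (congrArg Prod.fst hΦ) ⟨u, hu⟩
    simpa [Φ, L1, L2, LinearMap.funLeft, hx, hy, Function.comp_def] using this
  have hΦ2 : ∀ j : Fin (Fintype.card V), ¬ k ≤ j → c j = 0 := by
    intro j hj
    have := congrFun (congrArg Prod.snd hΦ) ⟨j, hj⟩
    simpa [Φ, L3, LinearMap.funLeft] using this
  have hUU : star U * U = 1 := Unitary.coe_star_mul_self hH.eigenvectorUnitary
  have hUT : Uᵀ = star U := by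
    rw [Matrix.star_eq_conjTranspose, Matrix.conjTranspose_eq_transpose_of_trivial]
  have hdot : ∀ z w : V → ℝ, (U *ᵥ z) ⬝ᵥ (U *ᵥ w) = z ⬝ᵥ w := by
    intro z w
    rw [Matrix.dotProduct_mulVec, ← Matrix.mulVec_transpose, Matrix.mulVec_mulVec, hUT, hUU,
      Matrix.one_mulVec]
  have hxx : x ⬝ᵥ x = y ⬝ᵥ y := by rw [hx]; exact hdot y y
  have hKx : G.lapMatrix ℝ *ᵥ x
      = U *ᵥ ((Matrix.diagonal (RCLike.ofReal ∘ hH.eigenvalues)) *ᵥ y) := by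
    conv_lhs => rw [hx, hH.spectral_theorem]
    rw [Unitary.conjStarAlgAut_apply, Matrix.mulVec_mulVec, Matrix.mulVec_mulVec, mul_assoc, hUU, mul_one]
  have hQ : x ⬝ᵥ (G.lapMatrix ℝ *ᵥ x) = ∑ v, hH.eigenvalues v * (y v * y v) := by
    rw [hKx, hx, hdot]
    simp only [dotProduct, Matrix.mulVec_diagonal, Function.comp_apply,
      RCLike.ofReal_real_eq_id, id_eq]
    exact Finset.sum_congr rfl fun v _ => by ring
  have hlow : hH.eigenvalues (p k) * (x ⬝ᵥ x) ≤ x ⬝ᵥ (G.lapMatrix ℝ *ᵥ x) := by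
    rw [hQ, hxx]
    simp only [dotProduct]
    rw [Finset.mul_sum]
    apply Finset.sum_le_sum
    intro v _
    by_cases hv : y v = 0
    · simp [hv]
    · have hkv : k ≤ p.symm v := by
        by_contra h
        exact hv (hΦ2 _ h)
      have hev := hp hkv
      simp only [Equiv.apply_symm_apply] at hev
      nlinarith [mul_self_nonneg (y v)]
  have hupp : x ⬝ᵥ (G.lapMatrix ℝ *ᵥ x)
      ≤ 2 * ((G.degree (q k) : ℝ) * (x ⬝ᵥ x)) := by
    refine (quad_le_two_degree_sum G x).trans ?_
    have : (∑ i, (G.degree i : ℝ) * (x i * x i)) ≤ (G.degree (q k) : ℝ) * (x ⬝ᵥ x) := by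
      simp only [dotProduct]
      rw [Finset.mul_sum]
      apply Finset.sum_le_sum
      intro i _
      by_cases hxi : x i = 0
      · simp [hxi]
      · have hiS : i ∈ S := by
          by_contra h
          exact hxi (hΦ1 i h)
        rw [hSdef] at hiS
        obtain ⟨m, hm, rfl⟩ := Finset.mem_image.mp hiS
        have : (G.degree (q m) : ℝ) ≤ (G.degree (q k) : ℝ) :=
          Nat.cast_le.mpr (hq (Finset.mem_Iic.mp hm))
        nlinarith [mul_self_nonneg (x (q m))]
    linarith
  have hxne : x ≠ 0 := by
    intro h
    apply hc0
    have hyy : y ⬝ᵥ y = 0 := by rw [← hxx, h]; simp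
    have hy0 : ∀ v, y v = 0 := by
      intro v
      have := (Finset.sum_eq_zero_iff_of_nonneg (fun i _ => mul_self_nonneg (y i))).mp hyy v
        (Finset.mem_univ v)
      exact mul_self_eq_zero.mp this
    funext j
    have := hy0 (p j)
    simpa [hy, Equiv.symm_apply_apply] using this
  have hTpos : 0 < x ⬝ᵥ x := by
    obtain ⟨v, hv⟩ := Function.ne_iff.mp hxne
    exact Finset.sum_pos' (fun i _ => mul_self_nonneg (x i))
      ⟨v, Finset.mem_univ v, mul_self_pos.mpr hv⟩
  have := hlow.trans hupp
  have h2 : hH.eigenvalues (p k) * (x ⬝ᵥ x) ≤ (2 * (G.degree (q k) : ℝ)) * (x ⬝ᵥ x) := by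
    linarith
  exact le_of_mul_le_mul_right h2 hTpos
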